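/- WIS is a special case of the regression-assisted DR estimator (Theorem 1): take the constant feature φ(s,a) = 1 for all (s,a), so that β̂_n = (Σ_{i=1}^n w_i)⁻¹ (Σ_{i=1}^n w_i r(S_i,A_i)) where w_i = π(A_i|S_i)/π_b(A_i|S_i). Then, for every realized sample (since Σ_{i=1}^n w_i > 0 automatically), the regression-assisted DR estimator t̂_Reg,n = Σ_{s,a} P(s)π(a|s) β̂_n + (1/n) Σ_{i=1}^n w_i (r(S_i,A_i) − β̂_n) equals the weighted importance sampling estimator Σ_{i=1}^n (w_i / Σ_{j=1}^n w_j) r(S_i,A_i). -/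

import Mathlib

open Finset

/-- **WIS is a special case of the regression-assisted DR estimator
(Theorem 1).**  With the constant feature `φ(s,a) = 1`, the estimated
coefficient is `β̂ = (∑ i w i)⁻¹ (∑ i w i r(S_i,A_i))` where
`w i = π(A_i|S_i)/π_b(A_i|S_i)`.  For every realized sample
`SA : Fin n → S × A`, the regression-assisted DR estimator
`t̂_Reg = (∑_{s,a} P(s)π(a|s)) β̂ + (1/n) ∑ i w i (r(S_i,A_i) − β̂)`
equals the weighted importance sampling estimator
`∑ i (w i / ∑ j w j) r(S_i,A_i)`. -/
theorem wis_special_case_of_regression_dr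
    {S A : Type*} [Fintype S] [Fintype A] [Nonempty S] [Nonempty A]
    (P : S → ℝ) (pol polb : S → A → ℝ) (r : S → A → ℝ)
    (hP : ∀ s, 0 < P s) (hPsum : ∑ s, P s = 1)
    (hpol : ∀ s a, 0 ≤ pol s a) (hpolsum : ∀ s, ∑ a, pol s a = 1)
    (hpolb : ∀ s a, 0 < polb s a) (hpolbsum : ∀ s, ∑ a, polb s a = 1)
    (n : ℕ) (hn : 1 ≤ n) (SA : Fin n → S × A) :
    (let w : Fin n → ℝ := fun i => pol (SA i).1 (SA i).2 / polb (SA i).1 (SA i).2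
    let betaHat : ℝ := (∑ i, w i)⁻¹ * (∑ i, w i * r (SA i).1 (SA i).2)
    (∑ s, ∑ a, P s * pol s a) * betaHat
      + (1 / (n : ℝ)) * ∑ i, w i * (r (SA i).1 (SA i).2 - betaHat)
    = ∑ i, w i / (∑ j, w j) * r (SA i).1 (SA i).2) := by
  intro w betaHat
  have hone : (∑ s, ∑ a, P s * pol s a) = 1 := by
    have : ∀ s, ∑ a, P s * pol s a = P s := by
      intro s
      rw [← Finset.mul_sum, hpolsum s, mul_one]
    simp [this, hPsum]
  have hwnn : ∀ i, 0 ≤ w i := fun i =>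
    div_nonneg (hpol _ _) (hpolb _ _).le
  rw [hone, one_mul]
  by_cases hW : (∑ i, w i) = 0
  · have hzero : ∀ i ∈ Finset.univ, w i = 0 := by
      intro i _
      exact le_antisymm (hW ▸ Finset.single_le_sum (fun j _ => hwnn j) (Finset.mem_univ i)) (hwnn i)
    have : betaHat = 0 := by
      simp only [betaHat, hW, inv_zero, zero_mul]
    simp only [this, mul_zero, sub_zero]
    rw [Finset.sum_eq_zero (fun i hi => by rw [hzero i hi, zero_mul]),
        Finset.sum_eq_zero (fun i (hi : i ∈ Finset.univ) => by rw [hzero i hi, zero_div, zero_mul])]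
    simp
  · have hkey : ∑ i, w i * (r (SA i).1 (SA i).2 - betaHat) = 0 := by
      have h1 : ∑ i, w i * (r (SA i).1 (SA i).2 - betaHat)
          = (∑ i, w i * r (SA i).1 (SA i).2) - (∑ i, w i) * betaHat := by
        rw [Finset.sum_mul, ← Finset.sum_sub_distrib]
        exact Finset.sum_congr rfl (fun i _ => by ring)
      rw [h1]
      simp only [betaHat]
      field_simp
      ring
    rw [hkey, mul_zero, add_zero]
    rw [Finset.sum_congr rfl (fun (i : Fin n) _ => div_mul_eq_mul_div (w i) _ _),
        ← Finset.sum_div]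
    simp only [betaHat, inv_mul_eq_div]
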